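/- Let 0 < λ < 1 and n ≥ 1 be an integer. Let ξ₁, …, ξₙ, D₁, …, Dₙ be independent real random variables on a probability space, where each ξᵢ is exponentially distributed with rate λ (law with density λe^{−λx} on [0,∞)) and each Dᵢ is exponentially distributed with rate 1 (law with density e^{−x} on [0,∞)). Then P(ξ₁ + ⋯ + ξₙ < D₁ + ⋯ + Dₙ) ≤ (4λ/(1+λ)²)ⁿ. -/

import Mathlib

open MeasureTheory ProbabilityTheory
open Real Set

lemma measurable_gammaPDF' (a r : ℝ) : Measurable (gammaPDF a r) :=
  (measurable_gammaPDFReal a r).ennreal_ofReal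

lemma lintegral_exp_mul_expMeasure {r s : ℝ} (hr : 0 < r) (hs : s < r) :
    ∫⁻ x, ENNReal.ofReal (rexp (s * x)) ∂(expMeasure r)
      = ENNReal.ofReal (r / (r - s)) := by
  have hb : 0 < r - s := by linarith
  set g : ℝ → ℝ := (Ici (0:ℝ)).indicator (fun x => r * rexp (-((r - s) * x))) with hg
  have hint : Integrable g := by
    refine (IntegrableOn.integrable_indicator ?_ measurableSet_Ici)
    rw [integrableOn_Ici_iff_integrableOn_Ioi]
    simpa only [neg_mul, IntegrableOn] using (exp_neg_integrableOn_Ioi 0 hb).const_mul r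
  have hpdf : ∀ x : ℝ, gammaPDF 1 r x * ENNReal.ofReal (rexp (s * x))
      = ENNReal.ofReal (g x) := by
    intro x
    by_cases hx : 0 ≤ x
    · rw [show gammaPDF 1 r x = exponentialPDF r x from rfl, exponentialPDF_of_nonneg hx,
        ← ENNReal.ofReal_mul (by positivity)]
      simp only [hg, Set.indicator, mem_Ici, hx, if_true]
      congr 1
      rw [mul_assoc, ← Real.exp_add]
      ring_nf
    · rw [show gammaPDF 1 r x = exponentialPDF r x from rfl,
        exponentialPDF_of_neg (lt_of_not_ge hx)]
      simp [hg, Set.indicator, hx]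
  calc ∫⁻ x, ENNReal.ofReal (rexp (s * x)) ∂(expMeasure r)
      = ∫⁻ x, gammaPDF 1 r x * ENNReal.ofReal (rexp (s * x)) := by
        rw [expMeasure, gammaMeasure, lintegral_withDensity_eq_lintegral_mul _
          (measurable_gammaPDF' 1 r)
          (by fun_prop : Measurable fun x : ℝ => ENNReal.ofReal (rexp (s * x)))]
        rfl
    _ = ∫⁻ x, ENNReal.ofReal (g x) := by simp_rw [hpdf]
    _ = ENNReal.ofReal (∫ x, g x) := (ofReal_integral_eq_lintegral_ofReal hint
        (Filter.Eventually.of_forall fun x => by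
          by_cases hx : (0:ℝ) ≤ x <;> simp [hg, Set.indicator, hx]
          positivity)).symm
    _ = ENNReal.ofReal (r / (r - s)) := by
        congr 1
        rw [hg, integral_indicator measurableSet_Ici, integral_Ici_eq_integral_Ioi,
          integral_const_mul]
        have h1 : ∫ x in Ioi (0:ℝ), rexp (-((r - s) * x)) = (1/(r-s)) := by
          have := integral_rpow_mul_exp_neg_mul_Ioi (a := 1) zero_lt_one hb
          simpa using this
        rw [h1]; field_simp

lemma mgf_of_map_expMeasure {Ω : Type*} [MeasurableSpace Ω] {μ : Measure Ω} {X : Ω → ℝ}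
    (hX : Measurable X) {r s : ℝ} (hr : 0 < r) (hs : s < r)
    (hmap : μ.map X = expMeasure r) :
    Integrable (fun ω => rexp (s * X ω)) μ ∧ mgf X μ s = r / (r - s) := by
  have hL : ∫⁻ ω, ENNReal.ofReal (rexp (s * X ω)) ∂μ = ENNReal.ofReal (r / (r - s)) := by
    rw [← lintegral_map (by fun_prop : Measurable fun x : ℝ => ENNReal.ofReal (rexp (s * x)))
      hX, hmap, lintegral_exp_mul_expMeasure hr hs]
  have hmeas : AEStronglyMeasurable (fun ω => rexp (s * X ω)) μ :=
    (measurable_exp.comp ((measurable_const_mul s).comp hX)).aestronglyMeasurable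
  have hint : Integrable (fun ω => rexp (s * X ω)) μ := by
    refine ⟨hmeas, ?_⟩
    rw [hasFiniteIntegral_iff_ofReal (ae_of_all _ fun ω => (exp_pos _).le), hL]
    exact ENNReal.ofReal_lt_top
  refine ⟨hint, ?_⟩
  rw [mgf, integral_eq_lintegral_of_nonneg_ae (ae_of_all _ fun ω => (exp_pos _).le) hmeas,
    hL, ENNReal.toReal_ofReal (div_nonneg hr.le (by linarith))]

/-- if ξ₁,…,ξₙ,D₁,…,Dₙ are independent, each ξᵢ ~ Exp(λ) with
0 < λ < 1 and each Dᵢ ~ Exp(1), then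
P(ξ₁ + ⋯ + ξₙ < D₁ + ⋯ + Dₙ) ≤ (4λ/(1+λ)²)ⁿ. -/
theorem exp_race_bound {Ω : Type*} [MeasurableSpace Ω] (μ : Measure Ω)
    [IsProbabilityMeasure μ] {lam : ℝ} (hlam0 : 0 < lam) (hlam1 : lam < 1)
    {n : ℕ} (hn : 1 ≤ n) (ξ D : Fin n → Ω → ℝ)
    (hξmeas : ∀ i, Measurable (ξ i)) (hDmeas : ∀ i, Measurable (D i))
    (hindep : iIndepFun (Sum.elim ξ D) μ)
    (hξlaw : ∀ i, μ.map (ξ i) = expMeasure lam)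
    (hDlaw : ∀ i, μ.map (D i) = expMeasure 1) :
    μ {ω | ∑ i, ξ i ω < ∑ i, D i ω}
      ≤ ENNReal.ofReal ((4 * lam / (1 + lam) ^ 2) ^ n) := by
  set t : ℝ := (1 - lam) / 2 with ht
  have ht0 : 0 < t := by simp only [ht]; linarith
  have ht1 : t < 1 := by simp only [ht]; linarith
  have hnt : -t < lam := by linarith
  set Y : Fin n ⊕ Fin n → Ω → ℝ := Sum.elim (fun i => -(ξ i)) D with hY
  have hYmeas : ∀ j, Measurable (Y j) := by
    rintro (i | i)
    · exact (hξmeas i).neg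
    · exact hDmeas i
  have hYindep : iIndepFun Y μ := by
    have h := hindep.comp (Sum.elim (fun _ : Fin n => fun x : ℝ => -x)
        (fun _ : Fin n => id))
      (by rintro (i | i)
          · exact measurable_neg
          · exact measurable_id)
    convert h using 1
    funext j
    cases j <;> rfl
  have hξmgf : ∀ i, Integrable (fun ω => rexp (t * Y (Sum.inl i) ω)) μ ∧
      mgf (Y (Sum.inl i)) μ t = lam / (lam + t) := by
    intro i
    obtain ⟨hint, hmgf⟩ := mgf_of_map_expMeasure (hξmeas i) hlam0 hnt (hξlaw i)
    constructor
    · have : (fun ω => rexp (t * Y (Sum.inl i) ω)) = fun ω => rexp (-t * ξ i ω) := by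
        funext ω
        simp [hY, mul_comm, neg_mul, mul_neg]
      rw [this]
      exact hint
    · have h1 : Y (Sum.inl i) = -(ξ i) := rfl
      rw [h1, mgf_neg, hmgf, sub_neg_eq_add]
  have hDmgf : ∀ i, Integrable (fun ω => rexp (t * Y (Sum.inr i) ω)) μ ∧
      mgf (Y (Sum.inr i)) μ t = 1 / (1 - t) := by
    intro i
    exact mgf_of_map_expMeasure (hDmeas i) one_pos ht1 (hDlaw i)
  have hintsum : Integrable (fun ω => rexp (t * (∑ j, Y j) ω)) μ :=
    hYindep.integrable_exp_mul_sum hYmeas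
      (by rintro (i | i) _
          · exact (hξmgf i).1
          · exact (hDmgf i).1)
  have hsub : {ω | ∑ i, ξ i ω < ∑ i, D i ω} ⊆ {ω | (0:ℝ) ≤ (∑ j, Y j) ω} := by
    intro ω hω
    simp only [mem_setOf_eq] at hω ⊢
    simp only [Finset.sum_apply, Fintype.sum_sum_type, hY, Sum.elim_inl, Sum.elim_inr,
      Pi.neg_apply, Finset.sum_neg_distrib]
    linarith
  have hchern := measure_ge_le_exp_mul_mgf (μ := μ) (X := ∑ j, Y j) 0 ht0.le hintsum
  rw [show (-t * 0 : ℝ) = 0 by ring, exp_zero, one_mul, hYindep.mgf_sum hYmeas] at hchern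
  have hprod : ∏ j, mgf (Y j) μ t = (4 * lam / (1 + lam) ^ 2) ^ n := by
    rw [Fintype.prod_sum_type]
    simp only [fun i => (hξmgf i).2, fun i => (hDmgf i).2]
    rw [Finset.prod_const, Finset.prod_const, Finset.card_univ, Fintype.card_fin,
      ← mul_pow]
    congr 1
    have h1 : lam + t = (1 + lam) / 2 := by simp only [ht]; ring
    have h2 : 1 - t = (1 + lam) / 2 := by simp only [ht]; ring
    rw [h1, h2]
    have : (1 + lam) ≠ 0 := by linarith
    field_simp
    ring
  rw [hprod] at hchern
  calc μ {ω | ∑ i, ξ i ω < ∑ i, D i ω} ≤ μ {ω | (0:ℝ) ≤ (∑ j, Y j) ω} := measure_mono hsub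
    _ ≤ ENNReal.ofReal ((4 * lam / (1 + lam) ^ 2) ^ n) := by
        rw [← ENNReal.ofReal_toReal (measure_ne_top μ _)]
        exact ENNReal.ofReal_le_ofReal hchern
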